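/- arXiv:1611.01920 — 2 statements merged into one kernel-verified Lean document; each statement's English description precedes it below -/
import Mathlib

section
/- For every integer k ≥ 2, L_k is a free abelian group of rank (k−1)!, and a ℤ-basis is given by the (k−1)! left-normed brackets [[⋯[[1, a_2], a_3], ⋯, a_{k−1}], a_k] as (a_2, a_3, …, a_k) ranges over all orderings of {2, 3, …, k}. Moreover, these elements span a direct summand of C_{k−1}^{(k)}. -/
noncomputable section

/-- The free associative `R`-algebra on noncommuting generators labelled by `Fin k`,
realized as the monoid algebra on the free monoid. -/
abbrev FA (R : Type) [CommRing R] (k : ℕ) : Type := MonoidAlgebra R (FreeMonoid (Fin k))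

/-- A word in the letters `Fin k`, as an element of the free associative algebra. -/
def wordElem (R : Type) [CommRing R] (k : ℕ) (w : List (Fin k)) : FA R k :=
  MonoidAlgebra.single (FreeMonoid.ofList w) 1

/-- `C_{n-1}^{(k)}`: the free `R`-submodule spanned by the injective words of length `n`. -/
def wordsLen (R : Type) [CommRing R] (k n : ℕ) : Submodule R (FA R k) :=
  Submodule.span R {x | ∃ w : List (Fin k), w.Nodup ∧ w.length = n ∧ x = wordElem R k w}

/-- Alternating sum of letter deletions of a single word. -/
def Dword (R : Type) [CommRing R] (k : ℕ) (w : List (Fin k)) : FA R k :=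
  ∑ j : Fin w.length, ((-1 : R) ^ (j : ℕ)) • wordElem R k (w.eraseIdx (j : ℕ))

/-- The differential `D`, extended linearly to the whole free algebra. -/
def Ddiff (R : Type) [CommRing R] (k : ℕ) : FA R k →ₗ[R] FA R k :=
  (Finsupp.lsum R fun w : FreeMonoid (Fin k) =>
    LinearMap.toSpanSingleton R (FA R k) (Dword R k (FreeMonoid.toList w))) ∘ₗ
    (MonoidAlgebra.coeffLinearEquiv R : FA R k ≃ₗ[R] (FreeMonoid (Fin k) →₀ R)).toLinearMap

/-- `IsLie R k S x`: `x` is an iterated graded Lie bracket of the letters of `S`, every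
letter of `S` appearing exactly once.  Here `[p, q] = pq - (-1)^(|p||q|) qp`. -/
inductive IsLie (R : Type) [CommRing R] (k : ℕ) : Finset (Fin k) → FA R k → Prop
  | letter (a : Fin k) : IsLie R k {a} (wordElem R k [a])
  | bracket {S T : Finset (Fin k)} {p q : FA R k} (hST : Disjoint S T)
      (hp : IsLie R k S p) (hq : IsLie R k T q) :
      IsLie R k (S ∪ T) (p * q - ((-1 : R) ^ (S.card * T.card)) • (q * p))

/-- An `L`-product: a product `P₁ ⋯ P_m` over a set partition `[k] = S₁ ⊔ ⋯ ⊔ S_m`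
with each `P i` in the submodule `L_{S i}` (so every block has at least two elements). -/
def IsLProduct (R : Type) [CommRing R] (k : ℕ) (x : FA R k) : Prop :=
  ∃ (m : ℕ) (S : Fin m → Finset (Fin k)) (P : Fin m → FA R k),
    (∀ i, 2 ≤ (S i).card) ∧
    (∀ i, P i ∈ Submodule.span R {y : FA R k | IsLie R k (S i) y}) ∧
    (∀ i j, i ≠ j → Disjoint (S i) (S j)) ∧
    Finset.univ.biUnion S = (Finset.univ : Finset (Fin k)) ∧
    x = (List.ofFn P).prod

/-- Auxiliary recursion for left-normed brackets: `lbrkAux R k x n l` brackets `x`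
(of degree `n`) successively with the letters of `l`. -/
def lbrkAux (R : Type) [CommRing R] (k : ℕ) : FA R k → ℕ → List (Fin k) → FA R k
  | x, _, [] => x
  | x, n, a :: rest =>
      lbrkAux R k (x * wordElem R k [a] - ((-1 : R) ^ n) • (wordElem R k [a] * x)) (n + 1) rest

/-- The left-normed iterated bracket `[[⋯[[a₁,a₂],a₃],⋯],a_m]` of a list of letters. -/
def leftBracket (R : Type) [CommRing R] (k : ℕ) : List (Fin k) → FA R k
  | [] => 0
  | a :: rest => lbrkAux R k (wordElem R k [a]) 1 rest

/-- Index type for the Reutenauer basis of `L_S`: lists enumerating `S` exactly once and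
starting with the smallest element of `S`. -/
def ReutIdx (k : ℕ) (S : Finset (Fin k)) : Type :=
  {l : List (Fin k) // l.Nodup ∧ l.toFinset = S ∧ ∃ s t, l = s :: t ∧ ∀ a ∈ S, s ≤ a}

namespace Work
attribute [local instance] Classical.propDecidable
variable {k : ℕ}

theorem wordElem_mul (u v : List (Fin k)) :
    wordElem ℤ k u * wordElem ℤ k v = wordElem ℤ k (u ++ v) := by
  simp [wordElem, MonoidAlgebra.single_mul_single, FreeMonoid.ofList_append]

def spanWords (P : List (Fin k) → Prop) : Submodule ℤ (FA ℤ k) :=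
  Submodule.span ℤ {x | ∃ w : List (Fin k), P w ∧ x = wordElem ℤ k w}

theorem mem_spanWords_iff {P : List (Fin k) → Prop} {x : FA ℤ k} :
    x ∈ spanWords P ↔ ∀ u ∈ x.coeff.support, P (FreeMonoid.toList u) := by
  have himg : {x : FA ℤ k | ∃ w : List (Fin k), P w ∧ x = wordElem ℤ k w} =
      (fun u : FreeMonoid (Fin k) => MonoidAlgebra.single u (1:ℤ)) ''
        {u : FreeMonoid (Fin k) | P (FreeMonoid.toList u)} := by
    ext y
    constructor
    · rintro ⟨w, hw, rfl⟩
      exact ⟨FreeMonoid.ofList w, by simpa using hw, rfl⟩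
    · rintro ⟨u, hu, rfl⟩
      exact ⟨FreeMonoid.toList u, hu, by simp [wordElem]⟩
  rw [spanWords, himg, ← MonoidAlgebra.supported_eq_span_single, MonoidAlgebra.mem_supported]
  rfl

def coeffAt (w : FreeMonoid (Fin k)) : FA ℤ k →ₗ[ℤ] ℤ where
  toFun f := f.coeff w
  map_add' _ _ := rfl
  map_smul' _ _ := rfl

theorem spanWords_mono {P Q : List (Fin k) → Prop} (h : ∀ w, P w → Q w) :
    spanWords (k := k) P ≤ spanWords Q := by
  apply Submodule.span_mono
  rintro x ⟨w, hw, rfl⟩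
  exact ⟨w, h w hw, rfl⟩

theorem mem_spanWords {P : List (Fin k) → Prop} {w : List (Fin k)} (h : P w) :
    wordElem ℤ k w ∈ spanWords P :=
  Submodule.subset_span ⟨w, h, rfl⟩

theorem mul_mem_spanWords {P Q : List (Fin k) → Prop} {p q : FA ℤ k}
    (hp : p ∈ spanWords P) (hq : q ∈ spanWords Q) :
    p * q ∈ spanWords (fun w => ∃ u v, P u ∧ Q v ∧ w = u ++ v) := by
  induction hp using Submodule.span_induction with
  | mem x hx =>
    obtain ⟨u, hu, rfl⟩ := hx
    induction hq using Submodule.span_induction with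
    | mem y hy =>
      obtain ⟨v, hv, rfl⟩ := hy
      rw [wordElem_mul]
      exact mem_spanWords ⟨u, v, hu, hv, rfl⟩
    | zero => simp
    | add y z _ _ h1 h2 => rw [mul_add]; exact add_mem h1 h2
    | smul c y _ h1 => rw [mul_smul_comm]; exact Submodule.smul_mem _ _ h1
  | zero => simp
  | add y z _ _ h1 h2 => rw [add_mul]; exact add_mem h1 h2
  | smul c y _ h1 => rw [smul_mul_assoc]; exact Submodule.smul_mem _ _ h1

/-- expansion: an `IsLie` element lies in the span of injective words enumerating `S`. -/
theorem IsLie.mem_spanWords {S : Finset (Fin k)} {x : FA ℤ k} (h : IsLie ℤ k S x) :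
    x ∈ spanWords (fun w => w.Nodup ∧ w.toFinset = S) := by
  induction h with
  | letter a => exact Work.mem_spanWords (by simp)
  | bracket hST hp hq ihp ihq =>
    rename_i S T p q
    refine sub_mem ?_ (Submodule.smul_mem _ _ ?_)
    · refine spanWords_mono ?_ (mul_mem_spanWords ihp ihq)
      rintro w ⟨u, v, ⟨hu, hut⟩, ⟨hv, hvt⟩, rfl⟩
      constructor
      · rw [List.nodup_append']
        refine ⟨hu, hv, fun a ha hav => ?_⟩
        exact Finset.disjoint_left.mp hST (hut ▸ List.mem_toFinset.mpr ha)
          (hvt ▸ List.mem_toFinset.mpr hav)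
      · rw [List.toFinset_append, hut, hvt]
    · refine spanWords_mono ?_ (mul_mem_spanWords ihq ihp)
      rintro w ⟨u, v, ⟨hu, hut⟩, ⟨hv, hvt⟩, rfl⟩
      constructor
      · rw [List.nodup_append']
        refine ⟨hu, hv, fun a ha hav => ?_⟩
        exact Finset.disjoint_left.mp hST (hvt ▸ List.mem_toFinset.mpr hav)
          (hut ▸ List.mem_toFinset.mpr ha)
      · rw [List.toFinset_append, hut, hvt, Finset.union_comm]

theorem IsLie.nonempty {S : Finset (Fin k)} {x : FA ℤ k} (h : IsLie ℤ k S x) : S.Nonempty := by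
  induction h with
  | letter a => exact ⟨a, by simp⟩
  | bracket hST hp hq ihp ihq => exact ihp.mono Finset.subset_union_left

/-- graded bracket with explicit degrees -/
def gbr (p : FA ℤ k) (m : ℕ) (q : FA ℤ k) (n : ℕ) : FA ℤ k :=
  p * q - ((-1 : ℤ) ^ (m * n)) • (q * p)

theorem lbrkAux_append (r : List (Fin k)) : ∀ (x : FA ℤ k) (n : ℕ) (a : Fin k),
    lbrkAux ℤ k x n (r ++ [a]) =
      lbrkAux ℤ k x n r * wordElem ℤ k [a]
        - ((-1:ℤ) ^ (n + r.length)) • (wordElem ℤ k [a] * lbrkAux ℤ k x n r) := by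
  induction r with
  | nil => intro x n a; simp [lbrkAux]
  | cons b t ih =>
    intro x n a
    simp only [List.cons_append, lbrkAux, ih, List.length_cons]
    have : n + (t.length + 1) = n + 1 + t.length := by omega
    rw [this]

theorem leftBracket_snoc (l : List (Fin k)) (hl : l ≠ []) (a : Fin k) :
    leftBracket ℤ k (l ++ [a]) =
      leftBracket ℤ k l * wordElem ℤ k [a]
        - ((-1:ℤ) ^ l.length) • (wordElem ℤ k [a] * leftBracket ℤ k l) := by
  obtain ⟨b, t, rfl⟩ := List.exists_cons_of_ne_nil hl
  simp only [List.cons_append, leftBracket, lbrkAux_append, List.length_cons]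
  have : t.length + 1 = 1 + t.length := by omega
  rw [this]

theorem leftBracket_singleton (a : Fin k) : leftBracket ℤ k [a] = wordElem ℤ k [a] := rfl

theorem isLie_leftBracket : ∀ (l : List (Fin k)), l ≠ [] → l.Nodup →
    IsLie ℤ k l.toFinset (leftBracket ℤ k l) := by
  intro l
  induction l using List.reverseRecOn with
  | nil => intro h; exact absurd rfl h
  | append_singleton l a ih =>
    intro _ hnd
    rcases eq_or_ne l [] with rfl | hl
    · simpa [leftBracket_singleton] using IsLie.letter (R := ℤ) (k := k) a
    · have hnd' : l.Nodup := (List.nodup_append'.mp hnd).1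
      have hna : a ∉ l := by
        intro hmem
        rcases List.nodup_append'.mp hnd with ⟨_, _, hdisj⟩
        exact hdisj hmem (by simp)
      have hdisj : Disjoint l.toFinset ({a} : Finset (Fin k)) := by
        simp only [Finset.disjoint_left, Finset.mem_singleton, List.mem_toFinset]
        intro b hb hba
        exact hna (hba ▸ hb)
      have h1 := ih hl hnd'
      have h2 := IsLie.bracket (R := ℤ) hdisj h1 (IsLie.letter a)
      have hcard : l.toFinset.card * ({a} : Finset (Fin k)).card = l.length := by
        simp [List.toFinset_card_of_nodup hnd']
      have hfin : l.toFinset ∪ ({a} : Finset (Fin k)) = (l ++ [a]).toFinset := by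
        simp
      rw [leftBracket_snoc l hl a]
      rw [hcard, hfin] at h2
      exact h2

theorem gbr_jacobi (P q1 q2 : FA ℤ k) (m α β : ℕ) :
    gbr P m (gbr q1 α q2 β) (α + β) =
      gbr (gbr P m q1 α) (m + α) q2 β - ((-1:ℤ) ^ (α * β)) • gbr (gbr P m q2 β) (m + β) q1 α := by
  have e1 : ((-1:ℤ)) ^ (m * (α + β)) = (-1:ℤ)^(m*α) * (-1:ℤ)^(m*β) := by
    rw [Nat.mul_add, pow_add]
  have e2 : ((-1:ℤ)) ^ ((m+α) * β) = (-1:ℤ)^(m*β) * (-1:ℤ)^(α*β) := by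
    rw [Nat.add_mul, pow_add]
  have e3 : ((-1:ℤ)) ^ ((m+β) * α) = (-1:ℤ)^(m*α) * (-1:ℤ)^(α*β) := by
    rw [Nat.add_mul, pow_add, Nat.mul_comm β α]
  unfold gbr
  rw [e1, e2, e3]
  rcases Nat.even_or_odd (m*α) with h1 | h1 <;>
    rcases Nat.even_or_odd (m*β) with h2 | h2 <;>
      rcases Nat.even_or_odd (α*β) with h3 | h3 <;>
        simp only [h1.neg_one_pow, h2.neg_one_pow, h3.neg_one_pow, one_mul, mul_one,
          neg_mul, mul_neg, neg_neg, one_smul, neg_smul, neg_one_smul] <;>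
        noncomm_ring

theorem lbrkAux_coeff (s : Fin k) :
    ∀ (t : List (Fin k)) (cur : List (Fin k)) (x : FA ℤ k) (n : ℕ),
      (∀ a ∈ t, a ≠ s) →
      (∀ w : FreeMonoid (Fin k), w.toList.head? = some s →
        x.coeff w = if w = FreeMonoid.ofList cur then 1 else 0) →
      ∀ w : FreeMonoid (Fin k), w.toList.head? = some s →
        (lbrkAux ℤ k x n t).coeff w = if w = FreeMonoid.ofList (cur ++ t) then 1 else 0 := by
  intro t
  induction t with
  | nil => intro cur x n _ hx w hw; simpa [lbrkAux] using hx w hw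
  | cons a r ih =>
    intro cur x n hts hx w hw
    have ha : a ≠ s := hts a (by simp)
    have key : ∀ w' : FreeMonoid (Fin k), w'.toList.head? = some s →
        (x * wordElem ℤ k [a] - ((-1:ℤ))^n • (wordElem ℤ k [a] * x)).coeff w' =
          if w' = FreeMonoid.ofList (cur ++ [a]) then 1 else 0 := by
      intro w' hw'
      have h2 : (wordElem ℤ k [a] * x).coeff w' = 0 := by
        apply MonoidAlgebra.single_mul_apply_of_not_exists_mul
        rintro ⟨d, hd⟩
        rw [hd] at hw'
        simp [FreeMonoid.toList_mul] at hw'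
        exact ha hw'
      rw [MonoidAlgebra.coeff_sub, MonoidAlgebra.coeff_smul, Finsupp.sub_apply, Finsupp.smul_apply, h2, smul_zero, sub_zero]
      by_cases hend : ∃ d : FreeMonoid (Fin k), w' = d * FreeMonoid.ofList [a]
      · obtain ⟨d, rfl⟩ := hend
        have H : ∀ u : FreeMonoid (Fin k), u * FreeMonoid.ofList [a] = d * FreeMonoid.ofList [a] ↔ u = d :=
          fun u => mul_left_inj _
        rw [wordElem, MonoidAlgebra.coeff_mul_single_eq_coeff_mul d (fun u _ => H u), mul_one]
        have hd0 : d ≠ 1 := by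
          rintro rfl
          simp [FreeMonoid.toList_mul] at hw'
          exact ha hw'
        have hne : d.toList ≠ [] := by
          intro h
          exact hd0 (FreeMonoid.toList.injective (by simpa [FreeMonoid.toList_one] using h))
        have hdh : d.toList.head? = some s := by
          rcases List.exists_cons_of_ne_nil hne with ⟨b, t', hbt⟩
          rw [FreeMonoid.toList_mul, hbt] at hw'
          rw [hbt]
          simpa using hw'
        rw [hx d hdh]
        have : d * FreeMonoid.ofList [a] = FreeMonoid.ofList (cur ++ [a]) ↔ d = FreeMonoid.ofList cur := by
          rw [FreeMonoid.ofList_append, mul_left_inj]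
        simp only [this]

      · rw [wordElem, MonoidAlgebra.mul_single_apply_of_not_exists_mul _ _ (by
          rintro ⟨d, hd⟩; exact hend ⟨d, hd⟩)]
        have : w' ≠ FreeMonoid.ofList (cur ++ [a]) := by
          rintro rfl
          exact hend ⟨FreeMonoid.ofList cur, by rw [FreeMonoid.ofList_append]⟩
        rw [if_neg this]
    have := ih (cur ++ [a]) _ (n+1) (fun b hb => hts b (by simp [hb])) key w hw
    have hl : (cur ++ [a]) ++ r = cur ++ a :: r := by simp
    rw [hl] at this
    rw [lbrkAux]
    exact this

theorem leftBracket_coeff (s : Fin k) (t : List (Fin k)) (h : ∀ a ∈ t, a ≠ s)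
    (w : FreeMonoid (Fin k)) (hw : w.toList.head? = some s) :
    (leftBracket ℤ k (s :: t)).coeff w = if w = FreeMonoid.ofList (s :: t) then 1 else 0 := by
  have init : ∀ w' : FreeMonoid (Fin k), w'.toList.head? = some s →
      (wordElem ℤ k [s]).coeff w' = if w' = FreeMonoid.ofList [s] then 1 else 0 := by
    intro w' _
    rw [wordElem]
    by_cases hh : w' = FreeMonoid.ofList [s]
    · subst hh; simp
    · rw [if_neg hh]
      exact Finsupp.single_eq_of_ne' (fun h2 => hh h2.symm)
  simpa [leftBracket] using lbrkAux_coeff s t [s] _ 1 h init w hw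


theorem gbr_add (x y q : FA ℤ k) (m n : ℕ) :
    gbr (x + y) m q n = gbr x m q n + gbr y m q n := by
  unfold gbr
  rw [add_mul, mul_add, smul_add]
  abel

theorem gbr_smul (c : ℤ) (x q : FA ℤ k) (m n : ℕ) :
    gbr (c • x) m q n = c • gbr x m q n := by
  unfold gbr
  rw [smul_mul_assoc, mul_smul_comm, smul_sub, smul_comm ((-1:ℤ)^(m*n)) c]

theorem gbr_zero (q : FA ℤ k) (m n : ℕ) : gbr 0 m q n = 0 := by
  simp [gbr]

theorem gbr_antisymm (p q : FA ℤ k) (m n : ℕ) :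
    gbr p m q n = -(((-1:ℤ)^(m*n)) • gbr q n p m) := by
  unfold gbr
  rw [Nat.mul_comm n m]
  rcases Nat.even_or_odd (m*n) with h | h <;>
    simp [h.neg_one_pow, Odd.neg_one_pow, sub_eq_add_neg] <;> abel

theorem gbr_mem_span_of_mem_span {s1 s2 : Set (FA ℤ k)} {p : FA ℤ k} {m n : ℕ} {q : FA ℤ k}
    (hp : p ∈ Submodule.span ℤ s1) (h : ∀ x ∈ s1, gbr x m q n ∈ Submodule.span ℤ s2) :
    gbr p m q n ∈ Submodule.span ℤ s2 := by
  induction hp using Submodule.span_induction with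
  | mem x hx => exact h x hx
  | zero => rw [gbr_zero]; exact zero_mem _
  | add x y _ _ h1 h2 => rw [gbr_add]; exact add_mem h1 h2
  | smul c x _ h1 => rw [gbr_smul]; exact Submodule.smul_mem _ _ h1

theorem nodup_append_of_disjoint {l t : List (Fin k)} (hl : l.Nodup) (ht : t.Nodup)
    (hd : Disjoint l.toFinset t.toFinset) : (l ++ t).Nodup := by
  rw [List.nodup_append']
  exact ⟨hl, ht, fun a ha hat => Finset.disjoint_left.mp hd
    (List.mem_toFinset.mpr ha) (List.mem_toFinset.mpr hat)⟩

/-- Lemma B: bracketing a left-normed bracket against any Lie element lands in the span of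
left-normed brackets extending the given prefix. -/
theorem gbr_leftBracket_mem {T : Finset (Fin k)} {q : FA ℤ k} (hq : IsLie ℤ k T q) :
    ∀ l : List (Fin k), l ≠ [] → l.Nodup → Disjoint l.toFinset T →
      gbr (leftBracket ℤ k l) l.length q T.card ∈
        Submodule.span ℤ {x | ∃ t : List (Fin k), t.Nodup ∧ t.toFinset = T ∧
          x = leftBracket ℤ k (l ++ t)} := by
  induction hq with
  | letter a =>
    intro l hl hnd _
    apply Submodule.subset_span
    refine ⟨[a], by simp, by simp, ?_⟩
    rw [leftBracket_snoc l hl a]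
    simp [gbr]
  | bracket hST hp' hq' ihp ihq =>
    rename_i T1 T2 q1 q2
    intro l hl hnd hdisj
    have hd1 : Disjoint l.toFinset T1 := hdisj.mono_right Finset.subset_union_left
    have hd2 : Disjoint l.toFinset T2 := hdisj.mono_right Finset.subset_union_right
    have hcard : (T1 ∪ T2).card = T1.card + T2.card := Finset.card_union_of_disjoint hST
    have hjac : gbr (leftBracket ℤ k l) l.length
        (q1 * q2 - ((-1:ℤ) ^ (T1.card * T2.card)) • (q2 * q1)) (T1 ∪ T2).card =
        gbr (gbr (leftBracket ℤ k l) l.length q1 T1.card) (l.length + T1.card) q2 T2.card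
          - ((-1:ℤ) ^ (T1.card * T2.card)) •
            gbr (gbr (leftBracket ℤ k l) l.length q2 T2.card) (l.length + T2.card) q1 T1.card := by
      rw [hcard]
      exact gbr_jacobi _ _ _ _ _ _
    rw [hjac]
    have half : ∀ (Ta Tb : Finset (Fin k)) (qa qb : FA ℤ k),
        Disjoint Ta Tb →
        Disjoint l.toFinset Ta → Disjoint l.toFinset Tb →
        (∀ l' : List (Fin k), l' ≠ [] → l'.Nodup → Disjoint l'.toFinset Ta →
          gbr (leftBracket ℤ k l') l'.length qa Ta.card ∈
            Submodule.span ℤ {x | ∃ t : List (Fin k), t.Nodup ∧ t.toFinset = Ta ∧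
              x = leftBracket ℤ k (l' ++ t)}) →
        (∀ l' : List (Fin k), l' ≠ [] → l'.Nodup → Disjoint l'.toFinset Tb →
          gbr (leftBracket ℤ k l') l'.length qb Tb.card ∈
            Submodule.span ℤ {x | ∃ t : List (Fin k), t.Nodup ∧ t.toFinset = Tb ∧
              x = leftBracket ℤ k (l' ++ t)}) →
        gbr (gbr (leftBracket ℤ k l) l.length qa Ta.card) (l.length + Ta.card) qb Tb.card ∈
          Submodule.span ℤ {x | ∃ t : List (Fin k), t.Nodup ∧ t.toFinset = Ta ∪ Tb ∧
            x = leftBracket ℤ k (l ++ t)} := by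
      intro Ta Tb qa qb hab ha hb iha ihb
      refine gbr_mem_span_of_mem_span (iha l hl hnd ha) ?_
      rintro x ⟨t1, ht1n, ht1f, rfl⟩
      have hlen : (l ++ t1).length = l.length + Ta.card := by
        rw [List.length_append, ← ht1f, List.toFinset_card_of_nodup ht1n]
      have hnd' : (l ++ t1).Nodup := nodup_append_of_disjoint hnd ht1n (ht1f ▸ ha)
      have hdisj' : Disjoint (l ++ t1).toFinset Tb := by
        rw [List.toFinset_append, Finset.disjoint_union_left]
        exact ⟨hb, ht1f ▸ hab⟩
      have := ihb (l ++ t1) (by simp [hl]) hnd' hdisj'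
      rw [hlen] at this
      refine Submodule.span_le.mpr ?_ this
      rintro y ⟨t2, ht2n, ht2f, rfl⟩
      apply Submodule.subset_span
      refine ⟨t1 ++ t2, ?_, ?_, by rw [List.append_assoc]⟩
      · exact nodup_append_of_disjoint ht1n ht2n (by rw [ht1f, ht2f]; exact hab)
      · rw [List.toFinset_append, ht1f, ht2f]
    refine sub_mem ?_ (Submodule.smul_mem _ _ ?_)
    · exact half T1 T2 q1 q2 hST hd1 hd2 ihp ihq
    · have := half T2 T1 q2 q1 hST.symm hd2 hd1 ihq ihp
      refine Submodule.span_le.mpr ?_ this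
      rintro y ⟨t, htn, htf, rfl⟩
      apply Submodule.subset_span
      exact ⟨t, htn, by rw [htf, Finset.union_comm], rfl⟩

/-- Main spanning lemma: every iterated Lie bracket on `S` lies in the span of left-normed
brackets on `S` starting with any chosen `s ∈ S`. -/
theorem isLie_mem_span_leftBracket {S : Finset (Fin k)} {x : FA ℤ k} (h : IsLie ℤ k S x) :
    ∀ s ∈ S, x ∈ Submodule.span ℤ {y | ∃ l : List (Fin k), l.Nodup ∧ l.toFinset = S ∧
      l.head? = some s ∧ y = leftBracket ℤ k l} := by
  induction h with
  | letter a =>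
    intro s hs
    apply Submodule.subset_span
    have : s = a := by simpa using hs
    subst this
    exact ⟨[s], by simp, by simp, by simp, (leftBracket_singleton s).symm⟩
  | bracket hST hp' hq' ihp ihq =>
    rename_i S1 S2 p q
    intro s hs
    have step : ∀ (Sa Sb : Finset (Fin k)) (pa qb : FA ℤ k), Disjoint Sa Sb → IsLie ℤ k Sb qb →
        pa ∈ Submodule.span ℤ {y | ∃ l : List (Fin k), l.Nodup ∧ l.toFinset = Sa ∧
          l.head? = some s ∧ y = leftBracket ℤ k l} →
        gbr pa Sa.card qb Sb.card ∈ Submodule.span ℤ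
          {y | ∃ l : List (Fin k), l.Nodup ∧ l.toFinset = Sa ∪ Sb ∧ l.head? = some s ∧
            y = leftBracket ℤ k l} := by
      intro Sa Sb pa qb hab hlie hmem
      refine gbr_mem_span_of_mem_span hmem ?_
      rintro x ⟨l, hln, hlf, hlh, rfl⟩
      have hl : l ≠ [] := by rintro rfl; simp at hlh
      have hcard : Sa.card = l.length := by rw [← hlf, List.toFinset_card_of_nodup hln]
      rw [hcard]
      have := gbr_leftBracket_mem hlie l hl hln (hlf ▸ hab)
      refine Submodule.span_le.mpr ?_ this
      rintro y ⟨t, htn, htf, rfl⟩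
      apply Submodule.subset_span
      refine ⟨l ++ t, nodup_append_of_disjoint hln htn (by rw [hlf, htf]; exact hab),
        by rw [List.toFinset_append, hlf, htf], ?_, rfl⟩
      rcases List.exists_cons_of_ne_nil hl with ⟨b, t', rfl⟩
      simpa using hlh
    rcases Finset.mem_union.mp hs with hs1 | hs2
    · exact step S1 S2 p q hST hq' (ihp s hs1)
    · have h2 := step S2 S1 q p hST.symm hp' (ihq s hs2)
      have heq : p * q - ((-1:ℤ)^(S1.card*S2.card)) • (q*p) =
          -(((-1:ℤ)^(S1.card*S2.card)) • gbr q S2.card p S1.card) :=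
        gbr_antisymm p q _ _
      rw [heq]
      refine neg_mem (Submodule.smul_mem _ _ ?_)
      refine Submodule.span_le.mpr ?_ h2
      rintro y ⟨l, a1, a2, a3, rfl⟩
      exact Submodule.subset_span ⟨l, a1, by rw [a2, Finset.union_comm], a3, rfl⟩

theorem nat_card_nodup_lists (S : Finset (Fin k)) :
    Nat.card {l : List (Fin k) // l.Nodup ∧ l.toFinset = S} = S.card.factorial := by
  have e1 : {l : List (Fin k) // l.Nodup ∧ l.toFinset = S} ≃
      {l : List (Fin k) // l ∈ S.toList.permutations} := by
    apply Equiv.subtypeEquivRight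
    intro l
    rw [List.mem_permutations]
    constructor
    · rintro ⟨h1, h2⟩
      exact List.perm_of_nodup_nodup_toFinset_eq h1 (Finset.nodup_toList S)
        (by rw [h2, Finset.toList_toFinset])
    · intro h
      exact ⟨h.nodup_iff.mpr (Finset.nodup_toList S),
        (List.toFinset_eq_of_perm _ _ h).trans (Finset.toList_toFinset S)⟩
  have e2 : {l : List (Fin k) // l ∈ S.toList.permutations} ≃
      {l : List (Fin k) // l ∈ S.toList.permutations.toFinset} :=
    Equiv.subtypeEquivRight (by intro l; simp)
  rw [Nat.card_congr (e1.trans e2), Nat.card_eq_finsetCard,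
    List.toFinset_card_of_nodup (List.nodup_permutations _ (Finset.nodup_toList S)),
    List.length_permutations, Finset.length_toList]

theorem reut_char (z : Fin k) (hzle : ∀ a : Fin k, z ≤ a) (l : List (Fin k)) :
    (l.Nodup ∧ l.toFinset = Finset.univ ∧
        ∃ s t, l = s :: t ∧ ∀ a ∈ (Finset.univ : Finset (Fin k)), s ≤ a)
    ↔ l.Nodup ∧ l.toFinset = Finset.univ ∧ l.head? = some z := by
  constructor
  · rintro ⟨h1, h2, s, t, rfl, hsle⟩
    refine ⟨h1, h2, ?_⟩
    have : s = z := le_antisymm (hsle z (Finset.mem_univ z)) (hzle s)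
    simp [this]
  · rintro ⟨h1, h2, h3⟩
    cases l with
    | nil => simp at h3
    | cons s t =>
      have hs : s = z := by simpa using h3
      subst hs
      exact ⟨h1, h2, s, t, rfl, fun a _ => hzle a⟩

theorem cons_tail_of_head {z : Fin k} : ∀ (l : List (Fin k)), l.head? = some z → z :: l.tail = l := by
  intro l h
  cases l with
  | nil => simp at h
  | cons s t =>
    have hs : s = z := by simpa using h
    subst hs
    rfl

theorem tail_prop (z : Fin k) (t : List (Fin k)) :
    ((z :: t).Nodup ∧ (z :: t).toFinset = Finset.univ) ↔
      (t.Nodup ∧ t.toFinset = Finset.univ.erase z) := by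
  constructor
  · rintro ⟨h1, h2⟩
    obtain ⟨hzn, h1'⟩ := List.nodup_cons.mp h1
    refine ⟨h1', ?_⟩
    ext a
    simp only [Finset.mem_erase, Finset.mem_univ, and_true, List.mem_toFinset]
    constructor
    · intro ha
      exact fun h => hzn (h ▸ ha)
    · intro ha
      have hmem : a ∈ (z :: t).toFinset := h2 ▸ Finset.mem_univ a
      simp only [List.toFinset_cons, Finset.mem_insert, List.mem_toFinset] at hmem
      rcases hmem with h | h
      · exact absurd h ha
      · exact h
  · rintro ⟨h1, h2⟩
    have hzn : z ∉ t := by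
      intro h
      have := h2 ▸ List.mem_toFinset.mpr h
      simp at this
    refine ⟨List.nodup_cons.mpr ⟨hzn, h1⟩, ?_⟩
    rw [List.toFinset_cons, h2, Finset.insert_erase (Finset.mem_univ z)]

theorem reutIdx_card (hk : 0 < k) :
    Nat.card (ReutIdx k (Finset.univ : Finset (Fin k))) = (k - 1).factorial := by
  set z : Fin k := ⟨0, hk⟩ with hzdef
  have hzle : ∀ a : Fin k, z ≤ a := fun a => by simp [hzdef, Fin.le_def]
  have e : ReutIdx k (Finset.univ : Finset (Fin k)) ≃
      {t : List (Fin k) // t.Nodup ∧ t.toFinset = Finset.univ.erase z} :=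
    { toFun := fun l => ⟨l.val.tail, by
        obtain ⟨h1, h2, h3⟩ := (reut_char z hzle l.val).mp l.prop
        have hc := cons_tail_of_head l.val h3
        exact (tail_prop z l.val.tail).mp (by rw [hc]; exact ⟨h1, h2⟩)⟩
      invFun := fun t => ⟨z :: t.val, (reut_char z hzle _).mpr
        ⟨((tail_prop z t.val).mpr t.prop).1, ((tail_prop z t.val).mpr t.prop).2, by simp⟩⟩
      left_inv := fun l => Subtype.ext
        (cons_tail_of_head l.val ((reut_char z hzle l.val).mp l.prop).2.2)
      right_inv := fun t => Subtype.ext rfl }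
  rw [Nat.card_congr e, nat_card_nodup_lists, Finset.card_erase_of_mem (Finset.mem_univ z),
    Finset.card_univ, Fintype.card_fin]

theorem leftBracket_coeff' {z : Fin k} {l : List (Fin k)} (hnd : l.Nodup)
    (hhead : l.head? = some z) (w : FreeMonoid (Fin k))
    (hw : w.toList.head? = some z) :
    (leftBracket ℤ k l).coeff w = if w = FreeMonoid.ofList l then 1 else 0 := by
  cases l with
  | nil => simp at hhead
  | cons s t =>
    have hs : s = z := by simpa using hhead
    subst hs
    exact leftBracket_coeff _ t (fun a ha haz => (List.nodup_cons.mp hnd).1 (by rwa [haz] at ha)) w hw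

end Work

open Work in
/-- `L_k` is free abelian of rank `(k-1)!`, with basis the left-normed brackets
`[[⋯[[1,a₂],a₃],⋯],a_k]` over orderings `(a₂,…,a_k)` of `{2,…,k}`; moreover these
span a direct summand of `C_{k-1}^{(k)}`. -/
theorem Lk_free_with_reutenauer_basis (k : ℕ) (hk : 2 ≤ k) :
    ∃ b : Module.Basis (ReutIdx k Finset.univ) ℤ
        ↥(Submodule.span ℤ {x : FA ℤ k | IsLie ℤ k Finset.univ x}),
      (∀ l : ReutIdx k Finset.univ, (b l).val = leftBracket ℤ k l.val) ∧
      Nat.card (ReutIdx k Finset.univ) = (k - 1).factorial ∧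
      ∃ N : Submodule ℤ (FA ℤ k), N ≤ wordsLen ℤ k k ∧
        Submodule.span ℤ {x : FA ℤ k | IsLie ℤ k Finset.univ x} ⊓ N = ⊥ ∧
        Submodule.span ℤ {x : FA ℤ k | IsLie ℤ k Finset.univ x} ⊔ N = wordsLen ℤ k k := by
  classical
  have hk0 : 0 < k := by omega
  set z : Fin k := ⟨0, hk0⟩ with hzdef
  have hzle : ∀ a : Fin k, z ≤ a := fun a => by simp [hzdef, Fin.le_def]
  set V := Submodule.span ℤ {x : FA ℤ k | IsLie ℤ k Finset.univ x} with hV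
  set B : ReutIdx k (Finset.univ : Finset (Fin k)) → FA ℤ k :=
    fun l => leftBracket ℤ k l.val with hB
  have idxprop : ∀ l : ReutIdx k (Finset.univ : Finset (Fin k)),
      l.val.Nodup ∧ l.val.toFinset = Finset.univ ∧ l.val.head? = some z :=
    fun l => (reut_char z hzle l.val).mp l.prop
  have hrange : Set.range B = {y : FA ℤ k | ∃ l : List (Fin k), l.Nodup ∧
      l.toFinset = Finset.univ ∧ l.head? = some z ∧ y = leftBracket ℤ k l} := by
    ext y
    constructor
    · rintro ⟨l, rfl⟩
      obtain ⟨h1, h2, h3⟩ := idxprop l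
      exact ⟨l.val, h1, h2, h3, rfl⟩
    · rintro ⟨l, h1, h2, h3, rfl⟩
      exact ⟨⟨l, (reut_char z hzle l).mpr ⟨h1, h2, h3⟩⟩, rfl⟩
  have hVspan : V = Submodule.span ℤ (Set.range B) := by
    rw [hrange, hV]
    apply le_antisymm
    · apply Submodule.span_le.mpr
      intro x hx
      exact isLie_mem_span_leftBracket hx z (Finset.mem_univ z)
    · apply Submodule.span_le.mpr
      rintro y ⟨l, h1, h2, h3, rfl⟩
      apply Submodule.subset_span
      have hl : l ≠ [] := by rintro rfl; simp at h3
      have hIs := isLie_leftBracket l hl h1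
      rw [h2] at hIs
      exact hIs
  have coeffB : ∀ (i : ReutIdx k (Finset.univ : Finset (Fin k))) (w : FreeMonoid (Fin k)),
      w.toList.head? = some z → (B i).coeff w = if w = FreeMonoid.ofList i.val then 1 else 0 := by
    intro i w hw
    obtain ⟨h1, _, h3⟩ := idxprop i
    exact leftBracket_coeff' h1 h3 w hw
  have hword : ∀ i : ReutIdx k (Finset.univ : Finset (Fin k)),
      (FreeMonoid.ofList i.val).toList.head? = some z := by
    intro i
    obtain ⟨_, _, h3⟩ := idxprop i
    simpa using h3
  have coeffBB : ∀ i j : ReutIdx k (Finset.univ : Finset (Fin k)),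
      (B j).coeff (FreeMonoid.ofList i.val) = if i = j then 1 else 0 := by
    intro i j
    rw [coeffB j _ (hword i)]
    by_cases h : i = j
    · subst h; simp
    · rw [if_neg, if_neg h]
      intro hh
      exact h (Subtype.ext (by simpa using congrArg FreeMonoid.toList hh))
  have li : LinearIndependent ℤ B := by
    rw [linearIndependent_iff']
    intro s g hsum i hi
    have hev := congrArg (coeffAt (FreeMonoid.ofList i.val)) hsum
    rw [map_sum, map_zero] at hev
    simp only [map_smul, smul_eq_mul] at hev
    rw [show (∑ j ∈ s, g j * coeffAt (FreeMonoid.ofList i.val) (B j)) =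
        ∑ j ∈ s, (if i = j then g j else 0) from Finset.sum_congr rfl (fun j _ => by
          rw [show coeffAt (FreeMonoid.ofList i.val) (B j) =
            (B j).coeff (FreeMonoid.ofList i.val) from rfl, coeffBB i j]
          by_cases h : i = j <;> simp [h])] at hev
    rw [Finset.sum_ite_eq s i g, if_pos hi] at hev
    exact hev
  refine ⟨(Module.Basis.span li).map (LinearEquiv.ofEq _ _ hVspan.symm), ?_, reutIdx_card hk0, ?_⟩
  · intro l
    rw [Module.Basis.map_apply]
    have : ((LinearEquiv.ofEq _ _ hVspan.symm) (Module.Basis.span li l) : FA ℤ k) =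
        ((Module.Basis.span li l : _) : FA ℤ k) := rfl
    rw [this, Module.Basis.span_apply]
  · set N := spanWords (fun w : List (Fin k) =>
      w.Nodup ∧ w.length = k ∧ w.head? ≠ some z) with hN
    have hWL : wordsLen ℤ k k = spanWords (fun w : List (Fin k) =>
        w.Nodup ∧ w.length = k) := by
      unfold wordsLen spanWords
      congr 1
      ext x
      constructor
      · rintro ⟨w, a, b, c⟩; exact ⟨w, ⟨a, b⟩, c⟩
      · rintro ⟨w, ⟨a, b⟩, c⟩; exact ⟨w, a, b, c⟩
    have hNle : N ≤ wordsLen ℤ k k := by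
      rw [hWL]
      exact spanWords_mono (fun w hw => ⟨hw.1, hw.2.1⟩)
    have hlen_of : ∀ w : List (Fin k), w.Nodup → w.toFinset = Finset.univ →
        w.length = k := by
      intro w h1 h2
      have h3 := List.toFinset_card_of_nodup h1
      rw [h2, Finset.card_univ, Fintype.card_fin] at h3
      omega
    have hVle : V ≤ wordsLen ℤ k k := by
      rw [hV, hWL]
      apply Submodule.span_le.mpr
      intro x hx
      exact spanWords_mono (fun w hw => ⟨hw.1, hlen_of w hw.1 hw.2⟩)
        (IsLie.mem_spanWords hx)
    refine ⟨N, hNle, ?_, ?_⟩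
    · rw [eq_bot_iff]
      rintro x ⟨hxV, hxN⟩
      have hcz : ∀ w : FreeMonoid (Fin k), w.toList.head? = some z → x.coeff w = 0 := by
        intro w hw
        by_contra h0
        exact (mem_spanWords_iff.mp hxN w (Finsupp.mem_support_iff.mpr h0)).2.2 hw
      rw [hVspan] at hxV
      obtain ⟨c, hc⟩ := (Finsupp.mem_span_range_iff_exists_finsupp).mp hxV
      have hci : ∀ i, c i = 0 := by
        intro i
        have hev := congrArg (coeffAt (FreeMonoid.ofList i.val)) hc
        rw [Finsupp.sum, map_sum] at hev
        simp only [map_smul, smul_eq_mul] at hev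
        rw [show coeffAt (FreeMonoid.ofList i.val) x = x.coeff (FreeMonoid.ofList i.val) from rfl,
          hcz _ (hword i)] at hev
        rw [show (∑ j ∈ c.support, c j * coeffAt (FreeMonoid.ofList i.val) (B j)) =
            ∑ j ∈ c.support, (if i = j then c j else 0) from
          Finset.sum_congr rfl (fun j _ => by
            rw [show coeffAt (FreeMonoid.ofList i.val) (B j) =
              (B j).coeff (FreeMonoid.ofList i.val) from rfl, coeffBB i j]
            by_cases h : i = j <;> simp [h])] at hev
        rw [Finset.sum_ite_eq c.support i c] at hev
        by_cases hm : i ∈ c.support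
        · rw [if_pos hm] at hev; exact hev
        · exact Finsupp.notMem_support_iff.mp hm
      have hc0 : c = 0 := Finsupp.ext hci
      rw [Submodule.mem_bot, ← hc, hc0, Finsupp.sum_zero_index]
    · apply le_antisymm (sup_le hVle hNle)
      rw [hWL, spanWords]
      apply Submodule.span_le.mpr
      rintro x ⟨w, ⟨hnd, hlenw⟩, rfl⟩
      by_cases hh : w.head? = some z
      · have htf : w.toFinset = Finset.univ := by
          apply (Finset.card_eq_iff_eq_univ _).mp
          rw [List.toFinset_card_of_nodup hnd, hlenw, Fintype.card_fin]
        set i : ReutIdx k (Finset.univ : Finset (Fin k)) :=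
          ⟨w, (reut_char z hzle w).mpr ⟨hnd, htf, hh⟩⟩ with hidef
        have hwl : w ≠ [] := by rintro rfl; simp at hh
        have hIs := isLie_leftBracket w hwl hnd
        rw [htf] at hIs
        have hyV : B i ∈ V := by
          rw [hV]
          exact Submodule.subset_span hIs
        have hyN : B i - wordElem ℤ k w ∈ N := by
          rw [hN, mem_spanWords_iff]
          intro u hu
          by_cases hz2 : u.toList.head? = some z
          · exfalso
            have h0 : (B i - wordElem ℤ k w).coeff u = 0 := by
              rw [MonoidAlgebra.coeff_sub, Finsupp.sub_apply, coeffB i u hz2, wordElem, MonoidAlgebra.coeff_single]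
              by_cases he : u = FreeMonoid.ofList w
              · rw [if_pos he, he, Finsupp.single_eq_same, sub_self]
              · rw [if_neg he, Finsupp.single_eq_of_ne' (fun hh2 => he hh2.symm), sub_zero]
            exact Finsupp.mem_support_iff.mp hu h0
          · have hu2 : u ∈ (B i).coeff.support := by
              rcases Finset.mem_union.mp (Finsupp.support_sub (f := (B i).coeff) (g := (wordElem ℤ k w).coeff) hu) with h | h
              · exact h
              · exfalso
                have heq : u = FreeMonoid.ofList w := by
                  have := Finsupp.support_single_subset (a := FreeMonoid.ofList w) (b := (1:ℤ)) h
                  simpa using this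
                apply hz2
                rw [heq]
                simpa using hh
            have hsp := mem_spanWords_iff.mp (IsLie.mem_spanWords hIs) u hu2
            exact ⟨hsp.1, hlen_of _ hsp.1 hsp.2, hz2⟩
        have hrw : wordElem ℤ k w = B i - (B i - wordElem ℤ k w) := by
          rw [sub_sub_cancel]
        rw [hrw]
        exact Submodule.sub_mem _ (Submodule.mem_sup_left hyV) (Submodule.mem_sup_right hyN)
      · exact Submodule.mem_sup_right (Submodule.subset_span ⟨w, ⟨hnd, hlenw, hh⟩, rfl⟩)
end
end

section
/- For every finite set S, the chain complexes Inj_*(S) and Inj⁺_*(S) are isomorphic as chain complexes of abelian groups; that is, there are ℤ-module isomorphisms Inj_p(S) ≅ Inj⁺_p(S) for all p that commute with the differentials. (The isomorphism need not be equivariant for the action of permutations of S.) -/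
noncomputable section

/-- Injective words of length `n` in the alphabet `α`. -/
abbrev InjWord (α : Type) (n : ℕ) : Type := {l : List α // l.Nodup ∧ l.length = n}

/-- The free ℤ-module on injective words of length `n`; this is the degree-`(n-1)` term
of (either version of) the complex of injective words. -/
abbrev InjMod (α : Type) (n : ℕ) : Type := InjWord α n →₀ ℤ

/-- Deleting the `j`-th letter of an injective word. -/
def eraseWord (α : Type) (n : ℕ) (w : InjWord α (n + 1)) (j : Fin (n + 1)) : InjWord α n :=
  ⟨w.val.eraseIdx (j : ℕ), by
    refine ⟨w.prop.1.sublist (List.eraseIdx_sublist _ _), ?_⟩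
    have hj : (j : ℕ) < w.val.length := by rw [w.prop.2]; exact j.isLt
    simp [List.length_eraseIdx, hj, w.prop.2]
    have := j.isLt
    omega⟩

/-- The differential of the (classical) complex of injective words: the alternating sum
of the letter-deletion maps. -/
def injD (α : Type) (n : ℕ) : InjMod α (n + 1) →ₗ[ℤ] InjMod α n :=
  Finsupp.lsum ℤ fun w => LinearMap.toSpanSingleton ℤ (InjMod α n)
    (∑ j : Fin (n + 1), ((-1 : ℤ) ^ (j : ℕ)) • Finsupp.single (eraseWord α n w j) 1)

/-- The sign `(-1)^{#{c ∈ C | c < a}}` arising from wedging `a` onto the (increasingly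
sorted) orientation of `C`. -/
def insSign (α : Type) [LinearOrder α] (C : Finset α) (a : α) : ℤ :=
  (-1) ^ (C.filter fun c => c < a).card

/-- The differential of the oriented complex of injective words `Inj⁺`, in the model
where the basis symbol attached to an injective word `u` is `u ⊗ (increasingly sorted
orientation of the complement of `u`)`: the non-alternating sum `Σ dᵢ⁺`,
`dᵢ⁺(u ⊗ ω) = (u minus its i-th letter) ⊗ (uᵢ ∧ ω)`. -/
def injPD (α : Type) [Fintype α] [LinearOrder α] (n : ℕ) :
    InjMod α (n + 1) →ₗ[ℤ] InjMod α n :=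
  Finsupp.lsum ℤ fun w => LinearMap.toSpanSingleton ℤ (InjMod α n)
    (∑ j : Fin (n + 1),
      insSign α (w.val.toFinset)ᶜ (w.val.get (Fin.cast w.prop.2.symm j)) •
        Finsupp.single (eraseWord α n w j) 1)


namespace InjAux

set_option linter.unusedSectionVars false

variable {α : Type} [Fintype α] [LinearOrder α]

def rk (a : α) : ℕ := (Finset.univ.filter (fun c => c < a)).card

def eps : List α → ℤ
  | [] => 1
  | a :: t => (-1) ^ (rk a + (t.filter (fun b => decide (b < a))).length) * eps t

lemma eps_mul_self (l : List α) : eps l * eps l = 1 := by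
  induction l with
  | nil => simp [eps]
  | cons a t ih =>
    simp only [eps]
    rw [mul_mul_mul_comm, ← pow_add, ← two_mul, pow_mul]
    simp [ih]

lemma filter_eraseIdx (p : α → Bool) :
    ∀ (t : List α) (j : ℕ) (h : j < t.length),
      ((t.eraseIdx j).filter p).length + (if p (t.get ⟨j, h⟩) then 1 else 0)
        = (t.filter p).length := by
  intro t
  induction t with
  | nil => intro j h; simp at h
  | cons b t ih =>
    intro j h
    cases j with
    | zero =>
      simp [List.filter_cons]
      split <;> simp [*]
    | succ j =>
      have hj : j < t.length := by simpa using h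
      have := ih j hj
      simp only [List.eraseIdx_cons_succ, List.filter_cons, List.get_cons_succ,
        List.get_eq_getElem] at this ⊢
      split <;> simp [this] <;> omega

lemma rk_split (a : α) (s : Finset α) :
    rk a = ((sᶜ).filter (fun c => c < a)).card + (s.filter (fun c => c < a)).card := by
  have hu : sᶜ ∪ s = (Finset.univ : Finset α) := by
    rw [Finset.union_comm]; simp
  rw [rk, ← Finset.card_union_of_disjoint
      (Finset.disjoint_filter_filter disjoint_compl_left),
    ← Finset.filter_union, hu]

lemma card_filter_toFinset (a : α) (t : List α) (ht : t.Nodup) :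
    (t.toFinset.filter (fun c => c < a)).card
      = (t.filter (fun b => decide (b < a))).length := by
  have h1 : (t.filter (fun b => decide (b < a))).toFinset
      = t.toFinset.filter (fun c => c < a) := by
    simp [List.toFinset_filter]
  rw [← h1, List.toFinset_card_of_nodup (ht.filter _)]

lemma insSign_cons (a x : α) (t : List α) (ha : a ∉ t) (hx : x ≠ a) :
    insSign α (t.toFinset)ᶜ x
      = insSign α ((a :: t).toFinset)ᶜ x * (if a < x then -1 else 1) := by
  have ha' : a ∈ (t.toFinset)ᶜ := by simp [ha]
  have hins : (t.toFinset)ᶜ = insert a (((a :: t).toFinset)ᶜ) := by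
    rw [List.toFinset_cons, Finset.compl_insert, Finset.insert_erase ha']
  have hnotmem : a ∉ ((a :: t).toFinset)ᶜ := by simp
  rw [insSign, insSign, hins, Finset.filter_insert]
  split
  · rw [Finset.card_insert_of_notMem (fun hc => hnotmem (Finset.mem_filter.mp hc).1),
      pow_succ]
  · rw [mul_one]

lemma key (l : List α) : ∀ (j : ℕ) (h : j < l.length), l.Nodup →
    (-1 : ℤ) ^ j * eps (l.eraseIdx j)
      = eps l * insSign α (l.toFinset)ᶜ (l.get ⟨j, h⟩) := by
  induction l with
  | nil => intro j h; simp at h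
  | cons a t ih =>
    intro j h hnd
    rw [List.nodup_cons] at hnd
    obtain ⟨hat, hnt⟩ := hnd
    cases j with
    | zero =>
      have hrk := rk_split a ((a :: t).toFinset)
      have hc : (((a :: t).toFinset).filter (fun c => c < a)).card
          = (t.filter (fun b => decide (b < a))).length := by
        rw [List.toFinset_cons, Finset.filter_insert, if_neg (lt_irrefl a)]
        exact card_filter_toFinset a t hnt
      simp only [List.eraseIdx_cons_zero, List.get_cons_zero, pow_zero, one_mul,
        eps, insSign]
      rw [hrk, hc]
      set K := ((((a :: t).toFinset)ᶜ).filter (fun c => c < a)).card with hK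
      set cnt := (t.filter (fun b => decide (b < a))).length with hcnt
      have e1 : ((-1 : ℤ)) ^ (K + cnt + cnt) = (-1) ^ K := by
        rw [show K + cnt + cnt = K + 2 * cnt by ring, pow_add, pow_mul]; simp
      have e2 : ((-1 : ℤ)) ^ K * (-1) ^ K = 1 := by
        rw [← pow_add, show K + K = 2 * K by ring, pow_mul]; simp
      calc eps t = (((-1 : ℤ)) ^ K * (-1) ^ K) * eps t := by rw [e2, one_mul]
        _ = (-1) ^ (K + cnt + cnt) * eps t * (-1) ^ K := by rw [e1]; ring
    | succ j =>
      have hj : j < t.length := by simpa using h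
      have hxmem : t.get ⟨j, hj⟩ ∈ t := List.get_mem t ⟨j, hj⟩
      have hx : t.get ⟨j, hj⟩ ≠ a := fun e => hat (e ▸ hxmem)
      have IH := ih j hj hnt
      have hB := insSign_cons a (t.get ⟨j, hj⟩) t hat hx
      have hC := filter_eraseIdx (fun b => decide (b < a)) t j hj
      simp only [decide_eq_true_eq] at hC
      have hget : (a :: t).get ⟨j + 1, h⟩ = t.get ⟨j, hj⟩ := by simp
      simp only [List.eraseIdx_cons_succ, hget, eps]
      rcases hx.lt_or_gt with hlt | hlt
      · rw [if_pos hlt] at hC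
        rw [if_neg (not_lt.mpr hlt.le), mul_one] at hB
        rw [← hC, ← hB]
        linear_combination ((-1 : ℤ) ^ (rk a + ((t.eraseIdx j).filter
          (fun b => decide (b < a))).length) * (-1)) * IH
      · rw [if_neg (not_lt.mpr hlt.le), add_zero] at hC
        rw [if_pos hlt] at hB
        rw [hC]
        rw [hB] at IH
        linear_combination (-((-1 : ℤ) ^ (rk a + (t.filter
          (fun b => decide (b < a))).length))) * IH


def F (n : ℕ) : InjMod α n →ₗ[ℤ] InjMod α n :=
  Finsupp.lsum ℤ fun w => LinearMap.toSpanSingleton ℤ (InjMod α n)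
    (Finsupp.single w (eps w.val))

lemma F_single (n : ℕ) (u : InjWord α n) (c : ℤ) :
    F n (Finsupp.single u c) = Finsupp.single u (c * eps u.val) := by
  simp [F, LinearMap.toSpanSingleton_apply, Finsupp.smul_single, smul_eq_mul]

lemma F_F (n : ℕ) : (F (α := α) n) ∘ₗ (F n) = LinearMap.id := by
  apply Finsupp.lhom_ext
  intro u b
  simp only [LinearMap.comp_apply, LinearMap.id_apply, F_single, mul_assoc,
    eps_mul_self, mul_one]

lemma F_comm (n : ℕ) : F (α := α) n ∘ₗ injD α n = injPD α n ∘ₗ F (n + 1) := by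
  apply Finsupp.lhom_ext
  intro w b
  have hl : w.val.length = n + 1 := w.prop.2
  simp only [LinearMap.comp_apply, injD, injPD, Finsupp.lsum_single,
    LinearMap.toSpanSingleton_apply, F_single]
  rw [map_smul, map_sum, Finset.smul_sum, Finset.smul_sum]
  refine Finset.sum_congr rfl ?_
  intro j _
  rw [map_smul, F_single]
  have hjl : (j : ℕ) < w.val.length := by rw [hl]; exact j.isLt
  have hk := key w.val (j : ℕ) hjl w.prop.1
  have hg : w.val.get (Fin.cast w.prop.2.symm j) = w.val.get ⟨(j : ℕ), hjl⟩ := rfl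
  have he : (eraseWord α n w j).val = w.val.eraseIdx (j : ℕ) := rfl
  rw [hg]
  simp only [Finsupp.smul_single, smul_eq_mul, one_mul, mul_one]
  congr 1
  rw [← he] at hk
  linear_combination b * hk

end InjAux

/-- The complex of injective words and the oriented complex of injective words are
    isomorphic as chain complexes of abelian groups (not necessarily equivariantly). -/
theorem inj_iso_injPlus (α : Type) [Fintype α] [LinearOrder α] :
    ∃ e : ∀ n : ℕ, InjMod α n ≃ₗ[ℤ] InjMod α n,
      ∀ n : ℕ, (e n).toLinearMap ∘ₗ injD α n = injPD α n ∘ₗ (e (n + 1)).toLinearMap := by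
  refine ⟨fun n => LinearEquiv.ofLinear (InjAux.F n) (InjAux.F n)
    (InjAux.F_F n) (InjAux.F_F n), fun n => ?_⟩
  exact InjAux.F_comm n
end
end
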